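/- Let P, Q be complex polynomials with P not identically zero, u ∈ ℂ, and suppose deg Q ≤ deg P. Then there exists a constant M > 0 such that for every t ≥ 0, every complex root z of the polynomial t·Q(z) + (z − u)·P(z) satisfies |z| ≤ M·(1 + t). -/

import Mathlib

open Polynomial Finset

theorem stmt16 (P Q : Polynomial ℂ) (hP : P ≠ 0) (hdeg : Q.natDegree ≤ P.natDegree)
    (u : ℂ) :
    ∃ M : ℝ, 0 < M ∧ ∀ t : ℝ, 0 ≤ t → ∀ z : ℂ,
      (t : ℂ) * Q.eval z + (z - u) * P.eval z = 0 →
      ‖z‖ ≤ M * (1 + t) := by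
  set n := P.natDegree with hn
  set S : Polynomial ℂ := (X - C u) * P with hS
  have hSdeg : S.natDegree = n + 1 := by
    rw [hS, natDegree_mul (X_sub_C_ne_zero u) hP, natDegree_X_sub_C]
    omega
  have hScoeff : S.coeff (n + 1) = P.leadingCoeff := by
    have : S.leadingCoeff = P.leadingCoeff := by
      rw [hS, leadingCoeff_mul, leadingCoeff_X_sub_C, one_mul]
    rw [← this, ← hSdeg]; rfl
  set L : ℝ := ‖P.leadingCoeff‖ with hL
  have hL0 : 0 < L := by
    simpa [hL] using leadingCoeff_ne_zero.mpr hP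
  set bQ : ℝ := ↑(Finset.sup (range (n + 1)) (fun i => ‖Q.coeff i‖₊)) with hbQ
  set bS : ℝ := ↑(Finset.sup (range (n + 1)) (fun i => ‖S.coeff i‖₊)) with hbS
  have hbQ0 : 0 ≤ bQ := NNReal.coe_nonneg _
  have hbS0 : 0 ≤ bS := NNReal.coe_nonneg _
  refine ⟨(bQ + bS) / L + 1, by positivity, ?_⟩
  intro t ht z hz
  set R : Polynomial ℂ := C (t : ℂ) * Q + S with hR
  have hRcoeff : ∀ i, R.coeff i = (t : ℂ) * Q.coeff i + S.coeff i := by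
    intro i; simp [hR]
  have hRtop : R.coeff (n + 1) = P.leadingCoeff := by
    rw [hRcoeff, coeff_eq_zero_of_natDegree_lt (by omega), hScoeff]; ring
  have hR0 : R ≠ 0 := by
    intro h
    rw [h] at hRtop
    exact leadingCoeff_ne_zero.mpr hP (by simpa using hRtop.symm)
  have hRdeg : R.natDegree = n + 1 := by
    have h1 : R.natDegree ≤ n + 1 := by
      apply natDegree_add_le_of_degree_le
      · exact (natDegree_C_mul_le _ _).trans (by omega)
      · omega
    have h2 : n + 1 ≤ R.natDegree := le_natDegree_of_ne_zero (by
      rw [hRtop]; exact leadingCoeff_ne_zero.mpr hP)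
    omega
  have hroot : R.IsRoot z := by
    simp only [IsRoot.def, hR, eval_add, eval_mul, eval_C, hS, eval_sub, eval_X]
    exact hz
  have hlt := hroot.norm_lt_cauchyBound hR0
  have hcb : (R.cauchyBound : ℝ) ≤ (t * bQ + bS) / L + 1 := by
    rw [cauchyBound]
    have hsup : (↑(Finset.sup (range R.natDegree) (fun i => ‖R.coeff i‖₊)) : ℝ)
        ≤ t * bQ + bS := by
      rw [← Real.coe_toNNReal (t * bQ + bS) (by positivity)]
      norm_cast
      apply Finset.sup_le
      intro i hi
      rw [hRdeg] at hi
      rw [← NNReal.coe_le_coe, Real.coe_toNNReal _ (by positivity), coe_nnnorm]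
      calc ‖R.coeff i‖ ≤ t * ‖Q.coeff i‖ + ‖S.coeff i‖ := by
            rw [hRcoeff]
            refine (norm_add_le _ _).trans ?_
            rw [norm_mul, Complex.norm_real, Real.norm_of_nonneg ht]
        _ ≤ t * bQ + bS := by
            gcongr
            · rw [hbQ, ← coe_nnnorm]; exact NNReal.coe_le_coe.mpr (Finset.le_sup (f := fun i => ‖Q.coeff i‖₊) hi)
            · rw [hbS, ← coe_nnnorm]; exact NNReal.coe_le_coe.mpr (Finset.le_sup (f := fun i => ‖S.coeff i‖₊) hi)
    have hlead : R.leadingCoeff = P.leadingCoeff := by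
      rw [← hRtop, ← hRdeg]; rfl
    rw [hlead]
    push_cast [coe_nnnorm]
    gcongr
  have hz' : ‖z‖ ≤ (t * bQ + bS) / L + 1 := by
    have : (‖z‖₊ : ℝ) < (R.cauchyBound : ℝ) := by exact_mod_cast hlt
    calc ‖z‖ = ‖z‖ := rfl
      _ ≤ (R.cauchyBound : ℝ) := le_of_lt (by simpa [coe_nnnorm] using this)
      _ ≤ _ := hcb
  refine hz'.trans ?_
  rw [div_add' _ _ _ hL0.ne', div_le_iff₀ hL0]
  have hM : (bQ + bS) / L * L = bQ + bS := div_mul_cancel₀ _ hL0.ne'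
  nlinarith [mul_nonneg ht hbQ0, mul_nonneg ht hbS0, mul_nonneg ht hL0.le]
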